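/- Let S be a finite meet-closed set and x_i ∈ S an element generating a double-chain set, with meetcl(C_S(x_i)) \ C_S(x_i) = A_i ∪ B_i disjoint chains, and suppose no element of C_S(x_i) attaches to both chains. For x_k in A_i ∪ B_i let η(x_k) be the number of elements of C_S(x_i) attached to x_k, and let x_a, x_b be the top elements of A_i, B_i. Then the Möbius function μ_S(·, x_i) of the poset S satisfies: μ_S(x_i, x_i) = 1; μ_S(x_j, x_i) = −1 for x_j ∈ C_S(x_i); μ_S(x_j, x_i) = η(x_j) − 1 if x_j ∈ {x_a, x_b} is maximal in A_i ∪ B_i; μ_S(x_j, x_i) = η(x_j) + 1 if x_a, x_b are incomparable and x_j = x_a ∧ x_b ∈ A_i ∪ B_i; μ_S(x_j, x_i) = η(x_j) for all other x_j ∈ A_i ∪ B_i; and μ_S(x_j, x_i) = 0 for all x_j not equal to x_i and not in meetcl(C_S(x_i)). -/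

import Mathlib

open scoped Classical

/-- `y` is covered by `x` in the induced order on `T`. -/
def coversIn {α : Type*} [SemilatticeInf α] (T : Set α) (y x : α) : Prop :=
  y ∈ T ∧ x ∈ T ∧ y < x ∧ ∀ z ∈ T, ¬(y < z ∧ z < x)

/-- The set of elements of `S` covered by `x` in `S`. -/
def CSet {α : Type*} [SemilatticeInf α] (S : Set α) (x : α) : Set α :=
  {y | coversIn S y x}

/-- The meet closure of `T`: all finite meets of elements of `T`. -/
def meetcl {α : Type*} [SemilatticeInf α] (T : Set α) : Set α :=
  {y | ∃ F : Finset α, ∃ h : F.Nonempty, ↑F ⊆ T ∧ y = F.inf' h id}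

/-- indicator of maximality in `AB`. -/
noncomputable def dmax {α : Type*} [SemilatticeInf α] (AB : Set α) (z : α) : ℤ :=
  if ∀ y ∈ AB, ¬z < y then 1 else 0

/-- indicator of being the meet of incomparable tops. -/
noncomputable def dmeet {α : Type*} [SemilatticeInf α] (xa xb z : α) : ℤ :=
  if ¬(xa ≤ xb ∨ xb ≤ xa) ∧ z = xa ⊓ xb then 1 else 0

theorem finset_exists_maximal_old {β : Type*} [Preorder β] (s : Finset β) (h : s.Nonempty) :
    ∃ m ∈ s, ∀ x ∈ s, ¬ m < x := by
  obtain ⟨m, hm⟩ := Finset.exists_maximal h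
  exact ⟨m, hm.1, fun x hx hlt => not_le_of_gt hlt (hm.2 hx hlt.le)⟩

theorem stmt4 {α : Type*} [SemilatticeInf α] [LocallyFiniteOrder α]
    (S : Finset α) (hmeet : ∀ x ∈ S, ∀ y ∈ S, x ⊓ y ∈ S)
    (xi : α) (hxi : xi ∈ S)
    (A B : Set α) (hdisj : Disjoint A B)
    (hchA : IsChain (· ≤ ·) A) (hchB : IsChain (· ≤ ·) B)
    (hAB : meetcl (CSet (↑S : Set α) xi) \ CSet (↑S : Set α) xi = A ∪ B)
    -- no element of `C_S(x_i)` attaches to both chains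
    (hno : ∀ z ∈ CSet (↑S : Set α) xi,
      ¬((∃ a ∈ A, coversIn (meetcl (CSet (↑S : Set α) xi)) a z) ∧
        (∃ b ∈ B, coversIn (meetcl (CSet (↑S : Set α) xi)) b z)))
    -- top elements of the chains (equal if one of the chains is empty)
    (xa xb : α)
    (hxa : A.Nonempty → xa ∈ A ∧ ∀ a ∈ A, a ≤ xa)
    (hxb : B.Nonempty → xb ∈ B ∧ ∀ b ∈ B, b ≤ xb)
    (hab : (A = ∅ ∨ B = ∅) → xa = xb)
    -- the Möbius function of the poset `S`
    (mu : α → α → ℤ)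
    (hmu1 : ∀ a, mu a a = 1)
    (hmu2 : ∀ y ∈ S, ∀ x ∈ S, y < x →
      mu y x = -∑ z ∈ S.filter (fun z => y < z ∧ z ≤ x), mu z x)
    (hmu0 : ∀ y x : α, ¬y ≤ x → mu y x = 0)
    -- the number of elements of `C_S(x_i)` attached to `k`
    (η : α → ℤ)
    (hη : ∀ k, η k =
      ({z ∈ CSet (↑S : Set α) xi |
        coversIn (meetcl (CSet (↑S : Set α) xi)) k z}.ncard : ℤ)) :
    mu xi xi = 1 ∧
    (∀ xj ∈ CSet (↑S : Set α) xi, mu xj xi = -1) ∧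
    (∀ xj, (xj = xa ∨ xj = xb) → xj ∈ A ∪ B → (∀ y ∈ A ∪ B, ¬xj < y) →
      mu xj xi = η xj - 1) ∧
    (∀ xj, (xj = xa ∨ xj = xb) → xj ∈ A ∪ B → (∃ y ∈ A ∪ B, xj < y) →
      mu xj xi = η xj) ∧
    (∀ xj ∈ A ∪ B, (∃ y ∈ A ∪ B, xj < y) → xj ≠ xa ⊓ xb → mu xj xi = η xj) ∧
    (¬(xa ≤ xb ∨ xb ≤ xa) → xa ⊓ xb ∈ A ∪ B →
      mu (xa ⊓ xb) xi = η (xa ⊓ xb) + 1) ∧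
    (∀ xj ∈ S, xj ≠ xi → xj ∉ meetcl (CSet (↑S : Set α) xi) → mu xj xi = 0) := by
  classical
  set C : Set α := CSet (↑S : Set α) xi with hCdef
  set M : Set α := meetcl C with hMdef
  -- basic facts
  have hCS : ∀ c ∈ C, c ∈ S := fun c hc => hc.1
  have hClt : ∀ c ∈ C, c < xi := fun c hc => hc.2.2.1
  have hCcov : ∀ c ∈ C, ∀ z ∈ S, ¬(c < z ∧ z < xi) := fun c hc z hz => hc.2.2.2 z hz
  have hCM : C ⊆ M := by
    intro c hc
    exact ⟨{c}, ⟨c, by simp⟩, by simpa using hc, by simp⟩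
  have hMS : ∀ y ∈ M, y ∈ S := by
    rintro y ⟨F, hne, hFC, rfl⟩
    have : F.inf' hne id ∈ (↑S : Set α) := by
      refine Finset.inf'_mem (↑S : Set α) ?_ F hne id (fun i hi => hCS i (hFC hi))
      intro x hx y hy
      exact hmeet x hx y hy
    exact this
  have hMlt : ∀ y ∈ M, y < xi := by
    rintro y ⟨F, hne, hFC, rfl⟩
    obtain ⟨f, hf⟩ := hne
    exact lt_of_le_of_lt (Finset.inf'_le id hf) (hClt f (hFC hf))
  have hMinf : ∀ x ∈ M, ∀ y ∈ M, x ⊓ y ∈ M := by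
    rintro x ⟨F, hFne, hFC, rfl⟩ y ⟨G, hGne, hGC, rfl⟩
    refine ⟨F ∪ G, hFne.mono Finset.subset_union_left, ?_, ?_⟩
    · intro z hz
      rcases Finset.mem_union.mp (by exact_mod_cast hz) with h|h
      · exact hFC h
      · exact hGC h
    · rw [Finset.inf'_union hFne hGne]
  have hABM : ∀ z, z ∈ A ∪ B ↔ z ∈ M ∧ z ∉ C := by
    intro z
    rw [← hAB]
    exact Iff.rfl
  have hABS : ∀ z ∈ A ∪ B, z ∈ S := fun z hz => hMS z ((hABM z).mp hz).1
  have hABlt : ∀ z ∈ A ∪ B, z < xi := fun z hz => hMlt z ((hABM z).mp hz).1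
  have hCmax : ∀ c ∈ C, ∀ z ∈ M, c ≤ z → c = z := by
    intro c hc z hz hle
    by_contra hne
    exact hCcov c hc z (hMS z hz) ⟨lt_of_le_of_ne hle hne, hMlt z hz⟩
  have hcoatom : ∀ y ∈ S, y < xi → ∃ c, c ∈ C ∧ y ≤ c := by
    intro y hy hlt
    obtain ⟨m, hm, hmax⟩ := finset_exists_maximal_old
      (S.filter (fun z => y ≤ z ∧ z < xi)) ⟨y, by simp [hy, hlt]⟩
    simp only [Finset.mem_filter] at hm
    refine ⟨m, ⟨hm.1, by exact_mod_cast hxi, hm.2.2, ?_⟩, hm.2.1⟩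
    intro z hz hcon
    have hzS : z ∈ S := by exact_mod_cast hz
    exact hmax z (by simp [hzS, le_trans hm.2.1 hcon.1.le, hcon.2]) hcon.1
  -- recursion in convenient form
  have hrec : ∀ y ∈ S, y < xi →
      mu y xi = -(1 + ∑ z ∈ S.filter (fun z => y < z ∧ z < xi), mu z xi) := by
    intro y hy hlt
    rw [hmu2 y hy xi hxi hlt]
    have hins : S.filter (fun z => y < z ∧ z ≤ xi)
        = insert xi (S.filter (fun z => y < z ∧ z < xi)) := by
      ext z
      simp only [Finset.mem_filter, Finset.mem_insert]
      constructor
      · rintro ⟨hzS, hyz, hzxi⟩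
        rcases eq_or_lt_of_le hzxi with h|h
        · exact Or.inl h
        · exact Or.inr ⟨hzS, hyz, h⟩
      · rintro (rfl|⟨h1, h2, h3⟩)
        · exact ⟨hxi, hlt, le_rfl⟩
        · exact ⟨h1, h2, h3.le⟩
    rw [hins, Finset.sum_insert (by simp), hmu1]
  -- mu on C
  have hmuC : ∀ c ∈ C, mu c xi = -1 := by
    intro c hc
    rw [hrec c (hCS c hc) (hClt c hc)]
    have : S.filter (fun z => c < z ∧ z < xi) = ∅ := by
      rw [Finset.filter_eq_empty_iff]
      intro z hz
      exact hCcov c hc z hz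
    rw [this, Finset.sum_empty]
    ring
  -- vanishing off the meet closure
  have hvanN : ∀ n : ℕ, ∀ y ∈ S, (S.filter (fun z => y < z)).card ≤ n →
      y < xi → y ∉ M → mu y xi = 0 := by
    intro n
    induction n with
    | zero =>
      intro y hy hcard hlt hnM
      exfalso
      have : xi ∈ S.filter (fun z => y < z) := by simp [hxi, hlt]
      have := Finset.card_pos.mpr ⟨xi, this⟩
      omega
    | succ n ih =>
      intro y hy hcard hlt hnM
      have hIH : ∀ z ∈ S, y < z → z < xi → z ∉ M → mu z xi = 0 := by
        intro z hz hyz hzlt hzM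
        refine ih z hz ?_ hzlt hzM
        have hss : S.filter (fun v => z < v) ⊂ S.filter (fun v => y < v) := by
          refine Finset.ssubset_iff_of_subset ?_ |>.mpr ⟨z, by simp [hz, hyz], by simp⟩
          intro v hv
          simp only [Finset.mem_filter] at hv ⊢
          exact ⟨hv.1, lt_trans hyz hv.2⟩
        have := Finset.card_lt_card hss
        omega
      -- the meet of all coatoms above y
      have hFne : (S.filter (fun c => c ∈ C ∧ y ≤ c)).Nonempty := by
        obtain ⟨c, hc, hyc⟩ := hcoatom y hy hlt
        exact ⟨c, by simp [hCS c hc, hc, hyc]⟩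
      set w := (S.filter (fun c => c ∈ C ∧ y ≤ c)).inf' hFne id with hwdef
      have hwM : w ∈ M := by
        refine ⟨S.filter (fun c => c ∈ C ∧ y ≤ c), hFne, ?_, rfl⟩
        intro c hc
        have : c ∈ S.filter (fun c => c ∈ C ∧ y ≤ c) := by exact_mod_cast hc
        exact (Finset.mem_filter.mp this).2.1
      have hyw : y ≤ w := by
        refine Finset.le_inf' hFne id ?_
        intro c hc
        exact (Finset.mem_filter.mp hc).2.2
      have hylw : y < w := lt_of_le_of_ne hyw (fun h => hnM (h ▸ hwM))
      have hwS : w ∈ S := hMS w hwM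
      have hwlt : w < xi := hMlt w hwM
      have hzw : ∀ z ∈ M, y < z → w ≤ z := by
        rintro z ⟨G, hGne, hGC, rfl⟩ hyz
        refine Finset.le_inf' hGne id ?_
        intro g hg
        have hgF : g ∈ S.filter (fun c => c ∈ C ∧ y ≤ c) := by
          refine Finset.mem_filter.mpr ⟨hCS g (hGC hg), hGC hg, ?_⟩
          exact le_trans hyz.le (Finset.inf'_le id hg)
        exact Finset.inf'_le id hgF
      have e1 : ∑ z ∈ S.filter (fun z => y < z ∧ z < xi), mu z xi
          = ∑ z ∈ S.filter (fun z => z ∈ M ∧ w ≤ z), mu z xi := by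
        symm
        refine Finset.sum_subset ?_ ?_
        · intro z hz
          simp only [Finset.mem_filter] at hz ⊢
          have hyz : y < z := lt_of_lt_of_le hylw hz.2.2
          exact ⟨hz.1, hyz, hMlt z hz.2.1⟩
        · intro z hz hz2
          simp only [Finset.mem_filter, not_and] at hz hz2
          by_cases hzM : z ∈ M
          · exact absurd (hzw z hzM hz.2.1) (hz2 hz.1 hzM)
          · exact hIH z hz.1 hz.2.1 hz.2.2 hzM
      have e2 : S.filter (fun z => z ∈ M ∧ w ≤ z)
          = insert w (S.filter (fun z => z ∈ M ∧ w < z)) := by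
        ext z
        simp only [Finset.mem_filter, Finset.mem_insert]
        constructor
        · rintro ⟨hzS, hzM, hle⟩
          rcases eq_or_lt_of_le hle with h|h
          · exact Or.inl h.symm
          · exact Or.inr ⟨hzS, hzM, h⟩
        · rintro (rfl|⟨h1, h2, h3⟩)
          · exact ⟨hwS, hwM, le_rfl⟩
          · exact ⟨h1, h2, h3.le⟩
      have e3 : ∑ z ∈ S.filter (fun z => w < z ∧ z < xi), mu z xi
          = ∑ z ∈ S.filter (fun z => z ∈ M ∧ w < z), mu z xi := by
        symm
        refine Finset.sum_subset ?_ ?_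
        · intro z hz
          simp only [Finset.mem_filter] at hz ⊢
          exact ⟨hz.1, hz.2.2, hMlt z hz.2.1⟩
        · intro z hz hz2
          simp only [Finset.mem_filter, not_and] at hz hz2
          by_cases hzM : z ∈ M
          · exact absurd hz.2.1 (hz2 hz.1 hzM)
          · exact hIH z hz.1 (lt_trans hylw hz.2.1) hz.2.2 hzM
      have hwnotin : w ∉ S.filter (fun z => z ∈ M ∧ w < z) := by simp
      have hsumy := hrec y hy hlt
      have hsumw := hrec w hwS hwlt
      rw [e1, e2, Finset.sum_insert hwnotin] at hsumy
      rw [e3] at hsumw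
      rw [hsumy, hsumw]
      ring
  have hvanish : ∀ y ∈ S, y ≠ xi → y ∉ M → mu y xi = 0 := by
    intro y hy hne hnM
    by_cases hle : y ≤ xi
    · exact hvanN (S.filter (fun z => y < z)).card y hy le_rfl
        (lt_of_le_of_ne hle hne) hnM
    · exact hmu0 y xi hle
  -- recursion restricted to the double chains
  have hrecAB : ∀ u ∈ A ∪ B, mu u xi
      = -1 + ((S.filter (fun c => c ∈ C ∧ u < c)).card : ℤ)
        - ∑ z ∈ S.filter (fun z => z ∈ A ∪ B ∧ u < z), mu z xi := by
    intro u hu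
    have huM : u ∈ M := ((hABM u).mp hu).1
    have huS : u ∈ S := hMS u huM
    have hult : u < xi := hMlt u huM
    have h0 := hrec u huS hult
    have e1 : ∑ z ∈ S.filter (fun z => u < z ∧ z < xi), mu z xi
        = ∑ z ∈ S.filter (fun z => z ∈ M ∧ u < z), mu z xi := by
      symm
      refine Finset.sum_subset ?_ ?_
      · intro z hz
        simp only [Finset.mem_filter] at hz ⊢
        exact ⟨hz.1, hz.2.2, hMlt z hz.2.1⟩
      · intro z hz hz2
        simp only [Finset.mem_filter, not_and] at hz hz2
        have hzM : z ∉ M := fun h => hz2 hz.1 h hz.2.1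
        exact hvanish z hz.1 (ne_of_lt hz.2.2) hzM
    have e2 : S.filter (fun z => z ∈ M ∧ u < z)
        = S.filter (fun z => z ∈ C ∧ u < z) ∪ S.filter (fun z => z ∈ A ∪ B ∧ u < z) := by
      ext z
      simp only [Finset.mem_filter, Finset.mem_union]
      constructor
      · rintro ⟨hzS, hzM, hlt⟩
        by_cases hzC : z ∈ C
        · exact Or.inl ⟨hzS, hzC, hlt⟩
        · exact Or.inr ⟨hzS, (hABM z).mpr ⟨hzM, hzC⟩, hlt⟩
      · rintro (⟨h1, h2, h3⟩|⟨h1, h2, h3⟩)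
        · exact ⟨h1, hCM h2, h3⟩
        · exact ⟨h1, ((hABM z).mp h2).1, h3⟩
    have edisj : Disjoint (S.filter (fun z => z ∈ C ∧ u < z))
        (S.filter (fun z => z ∈ A ∪ B ∧ u < z)) := by
      rw [Finset.disjoint_left]
      intro z hz1 hz2
      simp only [Finset.mem_filter] at hz1 hz2
      exact ((hABM z).mp hz2.2.1).2 hz1.2.1
    have e3 : ∑ z ∈ S.filter (fun z => z ∈ C ∧ u < z), mu z xi
        = -((S.filter (fun c => c ∈ C ∧ u < c)).card : ℤ) := by
      rw [Finset.sum_congr rfl (fun z hz => hmuC z (Finset.mem_filter.mp hz).2.1)]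
      simp
    rw [e1, e2, Finset.sum_union edisj, e3] at h0
    rw [h0]
    ring
  -- η as a finset cardinality
  have hetaF : ∀ k, η k = ((S.filter (fun c => c ∈ C ∧ coversIn M k c)).card : ℤ) := by
    intro k
    rw [hη k]
    congr 1
    have : {z ∈ C | coversIn M k z}
        = ↑(S.filter (fun c => c ∈ C ∧ coversIn M k c)) := by
      ext z
      simp only [Set.mem_setOf_eq, Finset.coe_filter, Set.mem_setOf_eq, Finset.mem_coe]
      constructor
      · rintro ⟨h1, h2⟩
        exact ⟨hCS z h1, h1, h2⟩
      · rintro ⟨h1, h2, h3⟩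
        exact ⟨h2, h3⟩
    rw [this, Set.ncard_coe_finset]
  -- each coatom covers a unique chain element
  have hcov_uniq : ∀ c ∈ C, ∀ z1 z2, z1 ∈ A ∪ B → z2 ∈ A ∪ B →
      coversIn M z1 c → coversIn M z2 c → z1 = z2 := by
    intro c hc z1 z2 h1 h2 hc1 hc2
    by_contra hne
    have hn12 : ¬ z1 < z2 := by
      intro hlt
      exact hc1.2.2.2 z2 ((hABM z2).mp h2).1 ⟨hlt, hc2.2.2.1⟩
    have hn21 : ¬ z2 < z1 := by
      intro hlt
      exact hc2.2.2.2 z1 ((hABM z1).mp h1).1 ⟨hlt, hc1.2.2.1⟩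
    rcases h1 with h1|h1 <;> rcases h2 with h2|h2
    · rcases hchA h1 h2 hne with h|h
      · exact hn12 (lt_of_le_of_ne h hne)
      · exact hn21 (lt_of_le_of_ne h (Ne.symm hne))
    · exact hno c hc ⟨⟨z1, h1, hc1⟩, ⟨z2, h2, hc2⟩⟩
    · exact hno c hc ⟨⟨z2, h2, hc2⟩, ⟨z1, h1, hc1⟩⟩
    · rcases hchB h1 h2 hne with h|h
      · exact hn12 (lt_of_le_of_ne h hne)
      · exact hn21 (lt_of_le_of_ne h (Ne.symm hne))
  -- existence of the covered element
  have hcov_ex : ∀ u ∈ A ∪ B, ∀ c ∈ C, u < c →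
      ∃ z, (z = u ∨ (z ∈ A ∪ B ∧ u < z)) ∧ coversIn M z c := by
    intro u hu c hc hlt
    have huM : u ∈ M := ((hABM u).mp hu).1
    obtain ⟨z0, hz0, hmax⟩ := finset_exists_maximal_old
      (S.filter (fun z => z ∈ M ∧ u ≤ z ∧ z < c))
      ⟨u, by simp [hMS u huM, huM, hlt]⟩
    simp only [Finset.mem_filter] at hz0
    obtain ⟨hz0S, hz0M, huz0, hz0c⟩ := hz0
    have hcov : coversIn M z0 c := by
      refine ⟨hz0M, hCM hc, hz0c, ?_⟩
      intro w hwM hcon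
      exact hmax w (by simp [hMS w hwM, hwM, le_trans huz0 hcon.1.le, hcon.2]) hcon.1
    refine ⟨z0, ?_, hcov⟩
    rcases eq_or_lt_of_le huz0 with h|h
    · exact Or.inl h.symm
    · refine Or.inr ⟨?_, h⟩
      refine (hABM z0).mpr ⟨hz0M, ?_⟩
      intro hz0C
      exact absurd (hCmax z0 hz0C c (hCM hc) hz0c.le) (ne_of_lt hz0c)
  -- the counting identity
  have hcount : ∀ u ∈ A ∪ B, ((S.filter (fun c => c ∈ C ∧ u < c)).card : ℤ)
      = η u + ∑ z ∈ S.filter (fun z => z ∈ A ∪ B ∧ u < z), η z := by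
    intro u hu
    have hunotin : u ∉ S.filter (fun z => z ∈ A ∪ B ∧ u < z) := by simp
    have hEq : S.filter (fun c => c ∈ C ∧ u < c)
        = (insert u (S.filter (fun z => z ∈ A ∪ B ∧ u < z))).biUnion
            (fun z => S.filter (fun c => c ∈ C ∧ coversIn M z c)) := by
      ext c
      simp only [Finset.mem_biUnion, Finset.mem_insert, Finset.mem_filter]
      constructor
      · rintro ⟨hcS, hcC, hlt⟩
        obtain ⟨z, hz, hcov⟩ := hcov_ex u hu c hcC hlt
        refine ⟨z, ?_, hcS, hcC, hcov⟩
        rcases hz with h|h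
        · exact Or.inl h
        · exact Or.inr ⟨hABS z h.1, h⟩
      · rintro ⟨z, hz, hcS, hcC, hcov⟩
        refine ⟨hcS, hcC, ?_⟩
        rcases hz with rfl|hz
        · exact hcov.2.2.1
        · exact lt_trans hz.2.2 hcov.2.2.1
    have hpd : ∀ z1 ∈ insert u (S.filter (fun z => z ∈ A ∪ B ∧ u < z)),
        ∀ z2 ∈ insert u (S.filter (fun z => z ∈ A ∪ B ∧ u < z)), z1 ≠ z2 →
        Disjoint (S.filter (fun c => c ∈ C ∧ coversIn M z1 c))
          (S.filter (fun c => c ∈ C ∧ coversIn M z2 c)) := by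
      intro z1 hz1 z2 hz2 hne
      have hz1AB : z1 ∈ A ∪ B := by
        rcases Finset.mem_insert.mp hz1 with rfl|h
        · exact hu
        · exact (Finset.mem_filter.mp h).2.1
      have hz2AB : z2 ∈ A ∪ B := by
        rcases Finset.mem_insert.mp hz2 with rfl|h
        · exact hu
        · exact (Finset.mem_filter.mp h).2.1
      rw [Finset.disjoint_left]
      intro c hc1 hc2
      simp only [Finset.mem_filter] at hc1 hc2
      exact hne (hcov_uniq c hc1.2.1 z1 z2 hz1AB hz2AB hc1.2.2 hc2.2.2)
    rw [hEq, Finset.card_biUnion hpd, Finset.sum_insert hunotin]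
    push_cast
    rw [← hetaF u]
    congr 1
    refine Finset.sum_congr rfl ?_
    intro z hz
    rw [← hetaF z]
  -- the key combinatorial identity for the deltas
  have hkey : ∀ u ∈ A ∪ B,
      (∑ z ∈ S.filter (fun z => z ∈ A ∪ B ∧ u < z), (dmax (A ∪ B) z - dmeet xa xb z))
      = 1 - dmax (A ∪ B) u + dmeet xa xb u := by
    intro u hu
    by_cases hcmp : xa ≤ xb ∨ xb ≤ xa
    · -- comparable tops: unique top element t
      obtain ⟨t, htAB, htub⟩ : ∃ t, t ∈ A ∪ B ∧ ∀ z ∈ A ∪ B, z ≤ t := by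
        rcases Set.eq_empty_or_nonempty A with hA|hA
        · rcases Set.eq_empty_or_nonempty B with hB|hB
          · exfalso
            rcases hu with h|h
            · exact absurd h (by simp [hA])
            · exact absurd h (by simp [hB])
          · refine ⟨xb, Or.inr (hxb hB).1, ?_⟩
            rintro z (hz|hz)
            · exact absurd hz (by simp [hA])
            · exact (hxb hB).2 z hz
        · rcases Set.eq_empty_or_nonempty B with hB|hB
          · refine ⟨xa, Or.inl (hxa hA).1, ?_⟩
            rintro z (hz|hz)
            · exact (hxa hA).2 z hz
            · exact absurd hz (by simp [hB])
          · rcases hcmp with h|h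
            · refine ⟨xb, Or.inr (hxb hB).1, ?_⟩
              rintro z (hz|hz)
              · exact le_trans ((hxa hA).2 z hz) h
              · exact (hxb hB).2 z hz
            · refine ⟨xa, Or.inl (hxa hA).1, ?_⟩
              rintro z (hz|hz)
              · exact (hxa hA).2 z hz
              · exact le_trans ((hxb hB).2 z hz) h
      have hmaxiff : ∀ z ∈ A ∪ B, (∀ y ∈ A ∪ B, ¬z < y) ↔ z = t := by
        intro z hz
        constructor
        · intro h
          by_contra hne
          exact h t htAB (lt_of_le_of_ne (htub z hz) hne)
        · rintro rfl y hy hlt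
          exact absurd (htub y hy) (not_le_of_gt hlt)
      have h1 : ∀ z ∈ S.filter (fun z => z ∈ A ∪ B ∧ u < z),
          dmax (A ∪ B) z - dmeet xa xb z = if z = t then (1:ℤ) else 0 := by
        intro z hz
        have hzAB : z ∈ A ∪ B := (Finset.mem_filter.mp hz).2.1
        have hdm : dmeet xa xb z = 0 := by
          unfold dmeet
          exact if_neg (fun h => h.1 hcmp)
        rw [hdm, sub_zero]
        unfold dmax
        by_cases hzt : z = t
        · rw [if_pos ((hmaxiff z hzAB).mpr hzt), if_pos hzt]
        · rw [if_neg (fun h => hzt ((hmaxiff z hzAB).mp h)), if_neg hzt]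
      rw [Finset.sum_congr rfl h1, Finset.sum_ite_eq' _ t (fun _ => (1:ℤ))]
      have hdmeetu : dmeet xa xb u = 0 := by
        unfold dmeet
        exact if_neg (fun h => h.1 hcmp)
      by_cases hut : u = t
      · subst hut
        rw [if_neg (by simp), hdmeetu]
        unfold dmax
        rw [if_pos ((hmaxiff u hu).mpr rfl)]
        ring
      · have hult : u < t := lt_of_le_of_ne (htub u hu) hut
        rw [if_pos (Finset.mem_filter.mpr ⟨hABS t htAB, htAB, hult⟩), hdmeetu]
        unfold dmax
        rw [if_neg (fun h => h t htAB hult)]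
        ring
    · -- incomparable tops
      have hAne : A.Nonempty := by
        rcases Set.eq_empty_or_nonempty A with h|h
        · exact absurd (le_of_eq (hab (Or.inl h))) (fun hle => hcmp (Or.inl hle))
        · exact h
      have hBne : B.Nonempty := by
        rcases Set.eq_empty_or_nonempty B with h|h
        · exact absurd (ge_of_eq (hab (Or.inr h))) (fun hle => hcmp (Or.inr hle))
        · exact h
      have hxaA : xa ∈ A := (hxa hAne).1
      have hxbB : xb ∈ B := (hxb hBne).1
      have hneab : xa ≠ xb := by
        intro h
        exact hcmp (Or.inl h.le)
      have hmlta : xa ⊓ xb < xa := by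
        refine lt_of_le_of_ne inf_le_left ?_
        intro h
        exact hcmp (Or.inl (h ▸ inf_le_right))
      have hmltb : xa ⊓ xb < xb := by
        refine lt_of_le_of_ne inf_le_right ?_
        intro h
        exact hcmp (Or.inr (h ▸ inf_le_left))
      have hmAB : xa ⊓ xb ∈ A ∪ B := by
        have hxaM : xa ∈ M := ((hABM xa).mp (Or.inl hxaA)).1
        have hxbM : xb ∈ M := ((hABM xb).mp (Or.inr hxbB)).1
        have hmM : xa ⊓ xb ∈ M := hMinf xa hxaM xb hxbM
        refine (hABM _).mpr ⟨hmM, ?_⟩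
        intro hmC
        exact absurd (hCmax _ hmC xa hxaM inf_le_left) (ne_of_lt hmlta)
      have hmaxxa : ∀ y ∈ A ∪ B, ¬xa < y := by
        rintro y (hy|hy) hlt
        · exact absurd ((hxa hAne).2 y hy) (not_le_of_gt hlt)
        · exact hcmp (Or.inl (le_trans hlt.le ((hxb hBne).2 y hy)))
      have hmaxxb : ∀ y ∈ A ∪ B, ¬xb < y := by
        rintro y (hy|hy) hlt
        · exact hcmp (Or.inr (le_trans hlt.le ((hxa hAne).2 y hy)))
        · exact absurd ((hxb hBne).2 y hy) (not_le_of_gt hlt)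
      have hmaxiff : ∀ z ∈ A ∪ B, (∀ y ∈ A ∪ B, ¬z < y) ↔ (z = xa ∨ z = xb) := by
        intro z hz
        constructor
        · intro h
          rcases hz with hzA|hzB
          · left
            by_contra hne
            exact h xa (Or.inl hxaA) (lt_of_le_of_ne ((hxa hAne).2 z hzA) hne)
          · right
            by_contra hne
            exact h xb (Or.inr hxbB) (lt_of_le_of_ne ((hxb hBne).2 z hzB) hne)
        · rintro (rfl|rfl)
          · exact hmaxxa
          · exact hmaxxb
      have h1 : ∀ z ∈ S.filter (fun z => z ∈ A ∪ B ∧ u < z),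
          dmax (A ∪ B) z - dmeet xa xb z
          = ((if z = xa then (1:ℤ) else 0) + (if z = xb then (1:ℤ) else 0))
            - (if z = xa ⊓ xb then (1:ℤ) else 0) := by
        intro z hz
        have hzAB : z ∈ A ∪ B := (Finset.mem_filter.mp hz).2.1
        congr 1
        · unfold dmax
          by_cases hm : ∀ y ∈ A ∪ B, ¬z < y
          · rw [if_pos hm]
            rcases (hmaxiff z hzAB).mp hm with rfl|rfl
            · rw [if_pos rfl, if_neg hneab]
              ring
            · rw [if_neg (Ne.symm hneab), if_pos rfl]
              ring
          · have hza : ¬ z = xa := by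
              rintro rfl
              exact hm ((hmaxiff _ hzAB).mpr (Or.inl rfl))
            have hzb : ¬ z = xb := by
              rintro rfl
              exact hm ((hmaxiff _ hzAB).mpr (Or.inr rfl))
            rw [if_neg hm, if_neg hza, if_neg hzb]
            ring
        · unfold dmeet
          by_cases hzm : z = xa ⊓ xb
          · rw [if_pos ⟨hcmp, hzm⟩, if_pos hzm]
          · rw [if_neg (fun h => hzm h.2), if_neg hzm]
      rw [Finset.sum_congr rfl h1]
      rw [Finset.sum_sub_distrib, Finset.sum_add_distrib]
      rw [Finset.sum_ite_eq' _ xa (fun _ => (1:ℤ)),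
        Finset.sum_ite_eq' _ xb (fun _ => (1:ℤ)),
        Finset.sum_ite_eq' _ (xa ⊓ xb) (fun _ => (1:ℤ))]
      have hmemU : ∀ z, z ∈ S.filter (fun z => z ∈ A ∪ B ∧ u < z)
          ↔ (z ∈ A ∪ B ∧ u < z) := by
        intro z
        simp only [Finset.mem_filter]
        exact ⟨fun h => h.2, fun h => ⟨hABS z h.1, h⟩⟩
      by_cases hum : u = xa ⊓ xb
      · subst hum
        have hxaU : xa ∈ S.filter (fun z => z ∈ A ∪ B ∧ xa ⊓ xb < z) :=
          (hmemU xa).mpr ⟨Or.inl hxaA, hmlta⟩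
        have hxbU : xb ∈ S.filter (fun z => z ∈ A ∪ B ∧ xa ⊓ xb < z) :=
          (hmemU xb).mpr ⟨Or.inr hxbB, hmltb⟩
        have hmU : xa ⊓ xb ∉ S.filter (fun z => z ∈ A ∪ B ∧ xa ⊓ xb < z) := by
          intro h
          exact lt_irrefl _ ((hmemU _).mp h).2
        rw [if_pos hxaU, if_pos hxbU, if_neg hmU]
        have hd1 : dmax (A ∪ B) (xa ⊓ xb) = 0 := by
          unfold dmax
          exact if_neg (fun h => h xa (Or.inl hxaA) hmlta)
        have hd2 : dmeet xa xb (xa ⊓ xb) = 1 := by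
          unfold dmeet
          exact if_pos ⟨hcmp, rfl⟩
        rw [hd1, hd2]
        ring
      · have hdmeetu : dmeet xa xb u = 0 := by
          unfold dmeet
          exact if_neg (fun h => hum h.2)
        by_cases humax : ∀ y ∈ A ∪ B, ¬u < y
        · have hxaU : xa ∉ S.filter (fun z => z ∈ A ∪ B ∧ u < z) := by
            intro h
            exact humax xa (Or.inl hxaA) ((hmemU _).mp h).2
          have hxbU : xb ∉ S.filter (fun z => z ∈ A ∪ B ∧ u < z) := by
            intro h
            exact humax xb (Or.inr hxbB) ((hmemU _).mp h).2
          have hmU : xa ⊓ xb ∉ S.filter (fun z => z ∈ A ∪ B ∧ u < z) := by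
            intro h
            exact humax _ hmAB ((hmemU _).mp h).2
          rw [if_neg hxaU, if_neg hxbU, if_neg hmU, hdmeetu]
          unfold dmax
          rw [if_pos humax]
          ring
        · have hdmaxu : dmax (A ∪ B) u = 0 := by
            unfold dmax
            exact if_neg humax
          rw [hdmaxu, hdmeetu]
          rcases hu with huA|huB
          · have hua : u < xa := by
              refine lt_of_le_of_ne ((hxa hAne).2 u huA) ?_
              rintro rfl
              exact humax ((hmaxiff u (Or.inl huA)).mpr (Or.inl rfl))
            have hxaU : xa ∈ S.filter (fun z => z ∈ A ∪ B ∧ u < z) :=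
              (hmemU xa).mpr ⟨Or.inl hxaA, hua⟩
            rw [if_pos hxaU]
            by_cases hub : u < xb
            · have hxbU : xb ∈ S.filter (fun z => z ∈ A ∪ B ∧ u < z) :=
                (hmemU xb).mpr ⟨Or.inr hxbB, hub⟩
              have hum2 : u < xa ⊓ xb := lt_of_le_of_ne (le_inf hua.le hub.le) hum
              have hmU : xa ⊓ xb ∈ S.filter (fun z => z ∈ A ∪ B ∧ u < z) :=
                (hmemU _).mpr ⟨hmAB, hum2⟩
              rw [if_pos hxbU, if_pos hmU]
              ring
            · have hxbU : xb ∉ S.filter (fun z => z ∈ A ∪ B ∧ u < z) := by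
                intro h
                exact hub ((hmemU _).mp h).2
              have hmU : xa ⊓ xb ∉ S.filter (fun z => z ∈ A ∪ B ∧ u < z) := by
                intro h
                exact hub (lt_of_lt_of_le ((hmemU _).mp h).2 inf_le_right)
              rw [if_neg hxbU, if_neg hmU]
              ring
          · have hub : u < xb := by
              refine lt_of_le_of_ne ((hxb hBne).2 u huB) ?_
              rintro rfl
              exact humax ((hmaxiff u (Or.inr huB)).mpr (Or.inr rfl))
            have hxbU : xb ∈ S.filter (fun z => z ∈ A ∪ B ∧ u < z) :=
              (hmemU xb).mpr ⟨Or.inr hxbB, hub⟩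
            rw [if_pos hxbU]
            by_cases hua : u < xa
            · have hxaU : xa ∈ S.filter (fun z => z ∈ A ∪ B ∧ u < z) :=
                (hmemU xa).mpr ⟨Or.inl hxaA, hua⟩
              have hum2 : u < xa ⊓ xb := lt_of_le_of_ne (le_inf hua.le hub.le) hum
              have hmU : xa ⊓ xb ∈ S.filter (fun z => z ∈ A ∪ B ∧ u < z) :=
                (hmemU _).mpr ⟨hmAB, hum2⟩
              rw [if_pos hxaU, if_pos hmU]
              ring
            · have hxaU : xa ∉ S.filter (fun z => z ∈ A ∪ B ∧ u < z) := by
                intro h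
                exact hua ((hmemU _).mp h).2
              have hmU : xa ⊓ xb ∉ S.filter (fun z => z ∈ A ∪ B ∧ u < z) := by
                intro h
                exact hua (lt_of_lt_of_le ((hmemU _).mp h).2 inf_le_left)
              rw [if_neg hxaU, if_neg hmU]
              ring
  -- the main formula on the chains
  have hmainN : ∀ n : ℕ, ∀ u ∈ A ∪ B, (S.filter (fun z => u < z)).card ≤ n →
      mu u xi = η u - dmax (A ∪ B) u + dmeet xa xb u := by
    intro n
    induction n with
    | zero =>
      intro u hu hcard
      exfalso
      have : xi ∈ S.filter (fun z => u < z) := by simp [hxi, hABlt u hu]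
      have := Finset.card_pos.mpr ⟨xi, this⟩
      omega
    | succ n ih =>
      intro u hu hcard
      have hIH : ∀ z ∈ S.filter (fun z => z ∈ A ∪ B ∧ u < z),
          mu z xi = η z - dmax (A ∪ B) z + dmeet xa xb z := by
        intro z hz
        simp only [Finset.mem_filter] at hz
        refine ih z hz.2.1 ?_
        have hss : S.filter (fun v => z < v) ⊂ S.filter (fun v => u < v) := by
          refine Finset.ssubset_iff_of_subset ?_ |>.mpr ⟨z, by simp [hz.1, hz.2.2], by simp⟩
          intro v hv
          simp only [Finset.mem_filter] at hv ⊢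
          exact ⟨hv.1, lt_trans hz.2.2 hv.2⟩
        have := Finset.card_lt_card hss
        omega
      have h0 := hrecAB u hu
      have h1 := hcount u hu
      have h2 := hkey u hu
      rw [Finset.sum_congr rfl hIH] at h0
      have h3 : ∑ z ∈ S.filter (fun z => z ∈ A ∪ B ∧ u < z),
          (η z - dmax (A ∪ B) z + dmeet xa xb z)
          = (∑ z ∈ S.filter (fun z => z ∈ A ∪ B ∧ u < z), η z)
            - ∑ z ∈ S.filter (fun z => z ∈ A ∪ B ∧ u < z),
                (dmax (A ∪ B) z - dmeet xa xb z) := by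
        rw [Finset.sum_add_distrib, Finset.sum_sub_distrib, Finset.sum_sub_distrib]
        ring
      rw [h3, h2] at h0
      rw [h0, h1]
      ring
  have hmain : ∀ u ∈ A ∪ B, mu u xi = η u - dmax (A ∪ B) u + dmeet xa xb u :=
    fun u hu => hmainN (S.filter (fun z => u < z)).card u hu le_rfl
  -- facts needed for the final assembly in the incomparable case
  have hicpack : ¬(xa ≤ xb ∨ xb ≤ xa) → xa ∈ A ∧ xa ⊓ xb < xa := by
    intro hcmp
    have hAne : A.Nonempty := by
      rcases Set.eq_empty_or_nonempty A with h|h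
      · exact absurd (le_of_eq (hab (Or.inl h))) (fun hle => hcmp (Or.inl hle))
      · exact h
    refine ⟨(hxa hAne).1, ?_⟩
    refine lt_of_le_of_ne inf_le_left ?_
    intro h
    exact hcmp (Or.inl (h ▸ inf_le_right))
  refine ⟨hmu1 xi, hmuC, ?_, ?_, ?_, ?_, hvanish⟩
  · -- part 3: maximal top elements
    intro xj hj1 hj2 hj3
    rw [hmain xj hj2]
    have hdmax : dmax (A ∪ B) xj = 1 := if_pos hj3
    have hdmeet : dmeet xa xb xj = 0 := by
      refine if_neg ?_
      rintro ⟨hic, rfl⟩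
      obtain ⟨hxaA, hmlt⟩ := hicpack hic
      exact hj3 xa (Or.inl hxaA) hmlt
    rw [hdmax, hdmeet]
    ring
  · -- part 4: non-maximal top elements
    intro xj hj1 hj2 hj3
    rw [hmain xj hj2]
    obtain ⟨y, hy, hlty⟩ := hj3
    have hdmax : dmax (A ∪ B) xj = 0 := if_neg (fun h => h y hy hlty)
    have hdmeet : dmeet xa xb xj = 0 := by
      refine if_neg ?_
      rintro ⟨hic, hm⟩
      rcases hj1 with rfl|rfl
      · exact hic (Or.inl (hm ▸ inf_le_right))
      · exact hic (Or.inr (hm ▸ inf_le_left))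
    rw [hdmax, hdmeet]
    ring
  · -- part 5: other non-maximal elements
    intro xj hj1 hj2 hj3
    rw [hmain xj hj1]
    obtain ⟨y, hy, hlty⟩ := hj2
    have hdmax : dmax (A ∪ B) xj = 0 := if_neg (fun h => h y hy hlty)
    have hdmeet : dmeet xa xb xj = 0 := if_neg (fun h => hj3 h.2)
    rw [hdmax, hdmeet]
    ring
  · -- part 6: the meet of incomparable tops
    intro hic hmem
    rw [hmain _ hmem]
    obtain ⟨hxaA, hmlt⟩ := hicpack hic
    have hdmax : dmax (A ∪ B) (xa ⊓ xb) = 0 :=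
      if_neg (fun h => h xa (Or.inl hxaA) hmlt)
    have hdmeet : dmeet xa xb (xa ⊓ xb) = 1 := if_pos ⟨hic, rfl⟩
    rw [hdmax, hdmeet]
    ring
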